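/- Let S be an affine semigroup minimally generated by E ⊔ A with E = {n₁,…,n_t} the i-multiplicities, such that for every m ∈ A there is some fixed k ∈ [t] with m − n_k ∈ 𝒞_S. If S_k = {x ∈ 𝒞_S : x + n_k ∈ S} is closed under addition (a semigroup), then S is a MED-semigroup. -/

import Mathlib

open Pointwise

/-- `S` is an affine semigroup: a finitely generated additive submonoid of `ℕ^p`
(containing `0`). -/
def IsAffine {p : ℕ} (S : Set (Fin p → ℕ)) : Prop :=
  ∃ F : Finset (Fin p → ℕ),
    S = (AddSubmonoid.closure (F : Set (Fin p → ℕ)) : Set (Fin p → ℕ))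

/-- The set of integer points of the rational cone generated by `S`:
`x` is a non-negative rational combination of elements of `S` iff some positive
multiple of `x` lies in the additive monoid generated by `S`. -/
def coneOf {p : ℕ} (S : Set (Fin p → ℕ)) : Set (Fin p → ℕ) :=
  {x | ∃ n : ℕ, 0 < n ∧ n • x ∈ AddSubmonoid.closure S}

/-- A `𝒞`-semigroup: an affine semigroup with finite complement in its cone. -/
def CSemigroup {p : ℕ} (S : Set (Fin p → ℕ)) : Prop :=
  IsAffine S ∧ (coneOf S \ S).Finite

/-- `P` is an ideal of `S`: `P ⊆ S` and `P + S ⊆ P`. -/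
def IsIdealOf {p : ℕ} (S P : Set (Fin p → ℕ)) : Prop :=
  P ⊆ S ∧ P + S ⊆ P

/-- `x ≤_S y` iff `y - x ∈ S`. -/
def leS {p : ℕ} (S : Set (Fin p → ℕ)) (x y : Fin p → ℕ) : Prop :=
  ∃ s ∈ S, x + s = y

/-- A non-empty subset `X ⊆ S` is `S`-incomparable if `x - x' ∉ S` for all
distinct `x, x' ∈ X`. -/
def SIncomparable {p : ℕ} (S X : Set (Fin p → ℕ)) : Prop :=
  X.Nonempty ∧ X ⊆ S ∧ ∀ x ∈ X, ∀ x' ∈ X, x ≠ x' → ¬ leS S x' x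

/-- The minimal generating set of `T`: non-zero elements of `T` that are not a
sum of two non-zero elements of `T`. -/
def msg {p : ℕ} (T : Set (Fin p → ℕ)) : Set (Fin p → ℕ) :=
  {x ∈ T | x ≠ 0 ∧ ¬ ∃ a ∈ T, ∃ b ∈ T, a ≠ 0 ∧ b ≠ 0 ∧ x = a + b}

/-- The Apery set `Ap(S, m) = {s ∈ S : s - m ∉ S}`. -/
def Ap {p : ℕ} (S : Set (Fin p → ℕ)) (m : Fin p → ℕ) : Set (Fin p → ℕ) :=
  {s ∈ S | ¬ ∃ u ∈ S, m + u = s}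

/-- `τ` is an extremal ray of the cone `C`: the set of points of `C` lying on the
ray spanned by some non-zero `v ∈ C`, such that whenever a sum of two elements of
`C` lies in `τ`, both summands lie in `τ`. -/
def IsExtremalRay {p : ℕ} (C τ : Set (Fin p → ℕ)) : Prop :=
  (∃ v : Fin p → ℕ, v ≠ 0 ∧ v ∈ C ∧
    τ = {x ∈ C | ∃ a b : ℕ, 0 < b ∧ b • x = a • v}) ∧
  ∀ x ∈ C, ∀ y ∈ C, x + y ∈ τ → x ∈ τ ∧ y ∈ τ

/-- `τ 1, …, τ t` are (exactly) the extremal rays of the cone `C`. -/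
def RaysOf {p t : ℕ} (C : Set (Fin p → ℕ)) (τ : Fin t → Set (Fin p → ℕ)) : Prop :=
  (∀ i, IsExtremalRay C (τ i)) ∧ Function.Injective τ ∧
    ∀ ρ, IsExtremalRay C ρ → ∃ i, ρ = τ i

/-- `m` is the `i`-multiplicity of `T` along the ray `τ`: the minimum non-zero
element of `τ ∩ T` for the componentwise order. -/
def MultOn {p : ℕ} (τ T : Set (Fin p → ℕ)) (m : Fin p → ℕ) : Prop :=
  m ∈ τ ∧ m ∈ T ∧ m ≠ 0 ∧ ∀ x ∈ τ ∩ T, x ≠ 0 → m ≤ x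

/-- `T` is an `I(S)`-semigroup: an affine semigroup such that `T \ {0}` is an
ideal of `S`. -/
def ISemigroupOf {p : ℕ} (S T : Set (Fin p → ℕ)) : Prop :=
  IsAffine T ∧ 0 ∈ T ∧ IsIdealOf S (T \ {0})

/-- `le` is a monomial order on `ℕ^p`: a total order compatible with addition in
which `0` is the least element. -/
def IsMonomialOrder {p : ℕ} (le : (Fin p → ℕ) → (Fin p → ℕ) → Prop) : Prop :=
  (∀ x, le x x) ∧ (∀ x y z, le x y → le y z → le x z) ∧
  (∀ x y, le x y → le y x → x = y) ∧ (∀ x y, le x y ∨ le y x) ∧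
  (∀ x y z, le x y → le (x + z) (y + z)) ∧ (∀ x, le 0 x)

/-- The pseudo-Frobenius elements of `T`. -/
def PF {p : ℕ} (T : Set (Fin p → ℕ)) : Set (Fin p → ℕ) :=
  {x ∈ coneOf T \ T | ∀ y ∈ T, y ≠ 0 → x + y ∈ T}

/-- If there is a fixed `k` such that `m - n k ∈ 𝒞_S` for every `m ∈ A`, and
`S k = {x ∈ 𝒞_S : x + n k ∈ S}` is closed under addition, then `S` is a
MED-semigroup: every non-zero element of `⋂ i, Ap(S, n i)` is a minimal
generator of `S`. -/
lemma decomp_aux {p : ℕ} (G : Set (Fin p → ℕ)) : ∀ a ∈ AddSubmonoid.closure G, a ≠ 0 →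
    ∃ g ∈ G, ∃ s ∈ AddSubmonoid.closure G, g + s = a := by
  intro a ha
  induction ha using AddSubmonoid.closure_induction with
  | mem x hx => exact fun _ => ⟨x, hx, 0, zero_mem _, add_zero x⟩
  | zero => exact fun h => absurd rfl h
  | add x y hx hy ihx ihy =>
    intro _
    rcases eq_or_ne x 0 with rfl | hx0
    · rcases eq_or_ne y 0 with rfl | hy0
      · simp_all
      · obtain ⟨g, hg, s, hs, hgs⟩ := ihy hy0
        exact ⟨g, hg, s, hs, by rw [hgs, zero_add]⟩
    · obtain ⟨g, hg, s, hs, hgs⟩ := ihx hx0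
      exact ⟨g, hg, s + y, add_mem hs hy, by rw [← add_assoc, hgs]⟩

theorem statement19 {p t : ℕ} (S : Set (Fin p → ℕ))
    (τ : Fin t → Set (Fin p → ℕ)) (hτ : RaysOf (coneOf S) τ)
    (e : Fin t → (Fin p → ℕ)) (A : Set (Fin p → ℕ))
    (hgen : S = (AddSubmonoid.closure (Set.range e ∪ A) : Set (Fin p → ℕ)))
    (hSaff : IsAffine S)
    (hmin : msg S = Set.range e ∪ A) (hdisj : Disjoint (Set.range e) A)
    (hmult : ∀ i, MultOn (τ i) S (e i)) (k : Fin t)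
    (hk : ∀ m ∈ A, ∃ c ∈ coneOf S, e k + c = m)
    (hclosed : ∀ x ∈ {x ∈ coneOf S | x + e k ∈ S},
      ∀ y ∈ {x ∈ coneOf S | x + e k ∈ S}, x + y ∈ {x ∈ coneOf S | x + e k ∈ S}) :
    ∀ x ∈ ⋂ i, Ap S (e i), x ≠ 0 → x ∈ msg S := by
  intro x hx hx0
  have hxAp : ∀ i, x ∈ Ap S (e i) := fun i => Set.mem_iInter.mp hx i
  have hxS : x ∈ S := (hxAp k).1
  have hSadd : ∀ a ∈ S, ∀ b ∈ S, a + b ∈ S := by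
    intro a ha b hb
    rw [hgen] at ha hb ⊢
    exact add_mem ha hb
  -- decompose a nonzero element of S into a minimal generator plus element of S
  have hdec : ∀ a ∈ S, a ≠ 0 → ∃ g ∈ Set.range e ∪ A, ∃ s ∈ S, g + s = a := by
    intro a ha ha0
    rw [hgen] at ha
    obtain ⟨g, hg, s, hs, hgs⟩ := decomp_aux _ a ha ha0
    exact ⟨g, hg, s, by rw [hgen]; exact hs, hgs⟩
  by_contra hnm
  have : ∃ a ∈ S, ∃ b ∈ S, a ≠ 0 ∧ b ≠ 0 ∧ x = a + b := by
    by_contra h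
    exact hnm ⟨hxS, hx0, h⟩
  obtain ⟨a, haS, b, hbS, ha0, hb0, hxab⟩ := this
  obtain ⟨g, hg, s, hsS, hgs⟩ := hdec a haS ha0
  obtain ⟨h, hh, s', hs'S, hhs'⟩ := hdec b hbS hb0
  have hxg : x = g + (h + (s + s')) := by
    rw [hxab, ← hgs, ← hhs']; ring
  have hss' : s + s' ∈ S := hSadd _ hsS _ hs'S
  have hray : ∀ i, g ≠ e i ∧ h ≠ e i := by
    intro i
    constructor
    · rintro rfl
      exact (hxAp i).2 ⟨h + (s + s'), hSadd _ ((hmin ▸ hh : h ∈ msg S).1) _ hss', hxg.symm⟩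
    · rintro rfl
      refine (hxAp i).2 ⟨g + (s + s'), hSadd _ ((hmin ▸ hg : g ∈ msg S).1) _ hss', ?_⟩
      rw [hxg]; ring
  have hgA : g ∈ A := by
    rcases hg with ⟨i, rfl⟩ | hgA
    · exact absurd rfl (hray i).1
    · exact hgA
  have hhA : h ∈ A := by
    rcases hh with ⟨i, rfl⟩ | hhA
    · exact absurd rfl (hray i).2
    · exact hhA
  obtain ⟨c, hc, hce⟩ := hk g hgA
  obtain ⟨c', hc', hc'e⟩ := hk h hhA
  have hgS : g ∈ S := (hmin ▸ (Set.mem_union_right _ hgA) : g ∈ msg S).1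
  have hhS : h ∈ S := (hmin ▸ (Set.mem_union_right _ hhA) : h ∈ msg S).1
  have hcm : c ∈ {x ∈ coneOf S | x + e k ∈ S} := ⟨hc, by rw [add_comm, hce]; exact hgS⟩
  have hc'm : c' ∈ {x ∈ coneOf S | x + e k ∈ S} := ⟨hc', by rw [add_comm, hc'e]; exact hhS⟩
  have hsum := hclosed c hcm c' hc'm
  have hsumS : c + c' + e k ∈ S := hsum.2
  refine (hxAp k).2 ⟨c + c' + e k + (s + s'), hSadd _ hsumS _ hss', ?_⟩
  rw [hxg, ← hce, ← hc'e]; ring
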